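/- As formal power series over ℚ, ∑_{n≥1} (∑_{d|n} μ(d) Q̂(n/d)) q^n = ∑_{n≥1} Q(n) q^n, where Q(n) counts partitions into distinct parts and Q̂(n) counts partitions with all parts of equal multiplicity. -/

import Mathlib

open PowerSeries

/-- `Q n`: the number of partitions of `n` into distinct parts. -/
def Q (n : ℕ) : ℕ := (Nat.Partition.distincts n).card

/-- `Qhat n`: the number of partitions of `n` in which every part occurs with
the same multiplicity. -/
def Qhat (n : ℕ) : ℕ :=
  (Finset.univ.filter fun p : Nat.Partition n =>
    ∀ i ∈ p.parts, ∀ j ∈ p.parts, p.parts.count i = p.parts.count j).card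

lemma nsmul_sum' (m : ℕ) (s : Multiset ℕ) : (m • s).sum = m * s.sum := by
  induction m with
  | zero => simp
  | succ k ih => rw [succ_nsmul, Multiset.sum_add, ih, add_mul, one_mul]

lemma sigma_partition_ext {d₁ d₂ : ℕ} (q₁ : Nat.Partition d₁) (q₂ : Nat.Partition d₂)
    (h : q₁.parts = q₂.parts) :
    (⟨d₁, q₁⟩ : Σ d : ℕ, Nat.Partition d) = ⟨d₂, q₂⟩ := by
  have hd : d₁ = d₂ := by rw [← q₁.parts_sum, ← q₂.parts_sum, h]
  subst hd
  exact congrArg _ (Nat.Partition.ext h)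

/-- The key combinatorial identity: `Q̂(n) = ∑_{d ∣ n} Q(d)` for `n > 0`. -/
lemma Qhat_eq_sum (n : ℕ) (hn : 0 < n) : Qhat n = ∑ d ∈ n.divisors, Q d := by
  classical
  rw [Qhat]
  simp only [Q]
  rw [← Finset.card_sigma]
  refine Finset.card_bij'
    (fun p _ => (⟨p.parts.dedup.sum,
      ⟨p.parts.dedup, fun hi => p.parts_pos (Multiset.mem_dedup.mp hi), rfl⟩⟩ :
        Σ d : ℕ, Nat.Partition d))
    (fun x hx => ⟨(n / x.1) • x.2.parts,
      fun hi => x.2.parts_pos (Multiset.mem_of_mem_nsmul hi),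
      by
        have hx1 : x.1 ∈ n.divisors := (Finset.mem_sigma.mp hx).1
        have hdvd : x.1 ∣ n := (Nat.mem_divisors.mp hx1).1
        rw [nsmul_sum', x.2.parts_sum, Nat.div_mul_cancel hdvd]⟩)
    ?_ ?_ ?_ ?_
  · -- forward maps into sigma
    intro p hp
    simp only [Finset.mem_filter, Finset.mem_univ, true_and] at hp
    have hne : p.parts ≠ 0 := by
      intro h
      rw [← p.parts_sum, h] at hn; simp at hn
    obtain ⟨a, ha⟩ := Multiset.exists_mem_of_ne_zero hne
    set m := p.parts.count a with hm
    have hkey : p.parts = m • p.parts.dedup := by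
      ext i
      rw [Multiset.count_nsmul, Multiset.count_dedup]
      by_cases hi : i ∈ p.parts
      · rw [if_pos hi, mul_one]; exact hp i hi a ha
      · rw [if_neg hi, mul_zero, Multiset.count_eq_zero_of_notMem hi]
    have hsum : n = m * p.parts.dedup.sum := by
      conv_lhs => rw [← p.parts_sum, hkey]
      rw [nsmul_sum']
    rw [Finset.mem_sigma]
    refine ⟨Nat.mem_divisors.mpr ⟨⟨m, by rw [mul_comm]; exact hsum⟩, hn.ne'⟩, ?_⟩
    simp [Nat.Partition.distincts, Multiset.nodup_dedup]
  · -- backward maps into filter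
    intro x hx
    rw [Finset.mem_sigma] at hx
    have hnodup : x.2.parts.Nodup := by
      have := hx.2
      simpa [Nat.Partition.distincts, Finset.mem_filter] using this
    simp only [Finset.mem_filter, Finset.mem_univ, true_and]
    intro i hi j hj
    simp only [Multiset.count_nsmul]
    rw [Multiset.count_eq_one_of_mem hnodup (Multiset.mem_of_mem_nsmul hi),
      Multiset.count_eq_one_of_mem hnodup (Multiset.mem_of_mem_nsmul hj)]
  · -- left inverse
    intro p hp
    simp only [Finset.mem_filter, Finset.mem_univ, true_and] at hp
    have hne : p.parts ≠ 0 := by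
      intro h
      rw [← p.parts_sum, h] at hn; simp at hn
    obtain ⟨a, ha⟩ := Multiset.exists_mem_of_ne_zero hne
    set m := p.parts.count a with hm
    have hmpos : 0 < m := Multiset.count_pos.mpr ha
    have hkey : p.parts = m • p.parts.dedup := by
      ext i
      rw [Multiset.count_nsmul, Multiset.count_dedup]
      by_cases hi : i ∈ p.parts
      · rw [if_pos hi, mul_one]; exact hp i hi a ha
      · rw [if_neg hi, mul_zero, Multiset.count_eq_zero_of_notMem hi]
    have hsum : n = m * p.parts.dedup.sum := by
      conv_lhs => rw [← p.parts_sum, hkey]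
      rw [nsmul_sum']
    have hdpos : 0 < p.parts.dedup.sum := by
      rcases Nat.eq_zero_or_pos p.parts.dedup.sum with h | h
      · rw [h, mul_zero] at hsum; omega
      · exact h
    have hdiv : n / p.parts.dedup.sum = m := by
      have h2 : m * p.parts.dedup.sum / p.parts.dedup.sum = m := Nat.mul_div_cancel _ hdpos
      rw [← hsum] at h2
      exact h2
    apply Nat.Partition.ext
    simp only [hdiv]
    exact hkey.symm
  · -- right inverse
    intro x hx
    rw [Finset.mem_sigma] at hx
    have hx1 : x.1 ∈ n.divisors := hx.1
    have hdvd : x.1 ∣ n := (Nat.mem_divisors.mp hx1).1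
    have hx1pos : 0 < x.1 := Nat.pos_of_mem_divisors hx1
    have hmpos : n / x.1 ≠ 0 := by
      have := Nat.le_of_dvd hn hdvd
      have := Nat.div_pos this hx1pos
      omega
    have hnodup : x.2.parts.Nodup := by
      have := hx.2
      simpa [Nat.Partition.distincts, Finset.mem_filter] using this
    have hded : ((n / x.1) • x.2.parts).dedup = x.2.parts := by
      rw [Multiset.dedup_nsmul hmpos, hnodup.dedup]
    obtain ⟨d, q⟩ := x
    exact sigma_partition_ext _ _ (by simpa using hded)
  
open ArithmeticFunction ArithmeticFunction.Moebius in
/-- `∑_{n ≥ 1} (∑_{d ∣ n} μ(d) Q̂(n/d)) qⁿ = ∑_{n ≥ 1} Q(n) qⁿ` over `ℚ`. -/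
theorem moebius_sum_Qhat_genfun :
    (PowerSeries.mk fun n => ∑ d ∈ n.divisors, (μ d : ℚ) * (Qhat (n / d) : ℚ)) =
      PowerSeries.mk fun n => if n = 0 then 0 else (Q n : ℚ) := by
  have key : ∀ n > 0, ∑ i ∈ Nat.divisors n, ((Q i : ℚ)) = (Qhat n : ℚ) := by
    intro n hn
    rw [Qhat_eq_sum n hn]
    push_cast
    rfl
  have inv := (ArithmeticFunction.sum_eq_iff_sum_mul_moebius_eq
    (R := ℚ) (f := fun n => (Q n : ℚ)) (g := fun n => (Qhat n : ℚ))).mp key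
  ext n
  simp only [coeff_mk]
  rcases Nat.eq_zero_or_pos n with h | h
  · simp [h]
  · rw [if_neg h.ne']
    rw [← inv n h, ← Nat.sum_divisorsAntidiagonal (fun d e => (μ d : ℚ) * (Qhat e : ℚ))]
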